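/- Let X be a random variable with values in [0,1]^d admitting a density with respect to the Lebesgue measure on [0,1]^d, and let Z be a real-valued square-integrable random variable. For a ∈ [0,1]^d write B_a = Π_{j=1}^d [0, a(j)). Then the function ν : ℝ × ℝ × [0,1]^d → ℝ defined by ν(α, β, a) = E[(Z − α·1{X ∈ B_a} − β·1{X ∉ B_a})²] is continuous. -/

import Mathlib

open MeasureTheory Filter

/-- The squared loss `(z − α·1{x ∈ B_a} − β·1{x ∉ B_a})²`, where
`B_a = Π_j [0, a(j))`, as a function of the data `(x, z)` and parameters `(α, β, a)`. -/
noncomputable def treeLoss {d : ℕ} (x : Fin d → ℝ) (z : ℝ) (p : ℝ × ℝ × (Fin d → ℝ)) : ℝ :=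
  (z - p.1 * (Set.univ.pi fun j => Set.Ico (0 : ℝ) (p.2.2 j)).indicator (fun _ => (1 : ℝ)) x
     - p.2.1 * ((Set.univ.pi fun j => Set.Ico (0 : ℝ) (p.2.2 j))ᶜ.indicator
        (fun _ => (1 : ℝ)) x)) ^ 2

private lemma treeLoss_mem_iff {d : ℕ} {x a : Fin d → ℝ} (hx : ∀ j, x j ≠ a j)
    {b : ℕ → Fin d → ℝ} (hb : Filter.Tendsto b atTop (nhds a)) :
    ∀ᶠ n in atTop,
      ((Set.univ.pi fun j => Set.Ico (0 : ℝ) (b n j)).indicator (fun _ => (1 : ℝ)) x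
        = (Set.univ.pi fun j => Set.Ico (0 : ℝ) (a j)).indicator (fun _ => (1 : ℝ)) x) ∧
      ((Set.univ.pi fun j => Set.Ico (0 : ℝ) (b n j))ᶜ.indicator (fun _ => (1 : ℝ)) x
        = ((Set.univ.pi fun j => Set.Ico (0 : ℝ) (a j))ᶜ.indicator (fun _ => (1 : ℝ)) x)) := by
  have hcoord : ∀ j, ∀ᶠ n in atTop, (x j < b n j ↔ x j < a j) := by
    intro j
    have hbj : Filter.Tendsto (fun n => b n j) atTop (nhds (a j)) :=
      tendsto_pi_nhds.1 hb j
    rcases lt_or_gt_of_ne (hx j) with h | h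
    · filter_upwards [hbj.eventually_const_lt h] with n hn
      simp [h, hn]
    · filter_upwards [hbj.eventually_lt_const h] with n hn
      simp [not_lt_of_gt h, not_lt.2 hn.le]
  filter_upwards [Filter.eventually_all.2 hcoord] with n hn
  have hmem : (x ∈ Set.univ.pi fun j => Set.Ico (0 : ℝ) (b n j)) ↔
      (x ∈ Set.univ.pi fun j => Set.Ico (0 : ℝ) (a j)) := by
    simp only [Set.mem_pi, Set.mem_univ, Set.mem_Ico, true_implies]
    constructor <;> intro h j
    · exact ⟨(h j).1, (hn j).1 (h j).2⟩
    · exact ⟨(h j).1, (hn j).2 (h j).2⟩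
  constructor
  · by_cases h : x ∈ Set.univ.pi fun j => Set.Ico (0 : ℝ) (a j)
    · rw [Set.indicator_of_mem (hmem.2 h), Set.indicator_of_mem h]
    · rw [Set.indicator_of_notMem (fun hh => h (hmem.1 hh)), Set.indicator_of_notMem h]
  · by_cases h : x ∈ Set.univ.pi fun j => Set.Ico (0 : ℝ) (a j)
    · rw [Set.indicator_of_notMem (by simpa using hmem.2 h),
        Set.indicator_of_notMem (by simpa using h)]
    · rw [Set.indicator_of_mem (by simpa using fun hh => h (hmem.1 hh)),
        Set.indicator_of_mem (by simpa using h)]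

/-- Let `X` be valued in `[0,1]^d` with a density w.r.t. Lebesgue measure and `Z` square
integrable.  Then `ν(α, β, a) = E[(Z − α·1{X ∈ B_a} − β·1{X ∉ B_a})²]` is continuous on
`ℝ × ℝ × [0,1]^d`. -/
theorem continuousOn_expected_tree_loss {Ω : Type*} [MeasurableSpace Ω]
    (μ : Measure Ω) [IsProbabilityMeasure μ]
    {d : ℕ} (X : Ω → (Fin d → ℝ)) (hX : Measurable X)
    (hXval : ∀ ω, X ω ∈ Set.Icc (0 : Fin d → ℝ) 1)
    (hdens : Measure.map X μ ≪ (volume : Measure (Fin d → ℝ)))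
    (Z : Ω → ℝ) (hZ : MemLp Z 2 μ) :
    ContinuousOn (fun p : ℝ × ℝ × (Fin d → ℝ) => ∫ ω, treeLoss (X ω) (Z ω) p ∂μ)
      (Set.univ ×ˢ Set.univ ×ˢ Set.Icc (0 : Fin d → ℝ) 1) := by
  apply Continuous.continuousOn
  rw [continuous_iff_continuousAt]
  intro p
  rw [ContinuousAt, Filter.tendsto_iff_seq_tendsto]
  intro u hu
  -- bound on the parameters along the sequence
  obtain ⟨C, hC⟩ : ∃ C : ℝ, ∀ n, |(u n).1| + |(u n).2.1| ≤ C := by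
    have t1 : Filter.Tendsto (fun n => (u n).1) atTop (nhds p.1) :=
      (continuous_fst.tendsto p).comp hu
    have t2 : Filter.Tendsto (fun n => (u n).2.1) atTop (nhds p.2.1) :=
      ((continuous_fst.comp continuous_snd).tendsto p).comp hu
    obtain ⟨C, hC⟩ := (t1.abs.add t2.abs).bddAbove_range
    exact ⟨C, fun n => hC ⟨n, rfl⟩⟩
  have hCnn : 0 ≤ C := le_trans (by positivity) (hC 0)
  -- integrability of the bound
  have hZ1 : Integrable Z μ := hZ.integrable one_le_two
  have hbound_int : Integrable (fun ω => (|Z ω| + C) ^ 2) μ := by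
    have heq : (fun ω => (|Z ω| + C) ^ 2)
        = fun ω => Z ω ^ 2 + (2 * C) * |Z ω| + C ^ 2 := by
      funext ω; rw [add_sq, sq_abs]; ring
    rw [heq]
    exact (hZ.integrable_sq.add (hZ1.abs.const_mul (2 * C))).add (integrable_const (C ^ 2))
  -- measurability of the integrands
  have hImeas : ∀ q : ℝ × ℝ × (Fin d → ℝ),
      AEStronglyMeasurable (fun ω => treeLoss (X ω) (Z ω) q) μ := by
    intro q
    have hs : MeasurableSet (Set.univ.pi fun j => Set.Ico (0 : ℝ) (q.2.2 j)) :=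
      MeasurableSet.univ_pi fun j => measurableSet_Ico
    have m1 : Measurable fun ω =>
        (Set.univ.pi fun j => Set.Ico (0 : ℝ) (q.2.2 j)).indicator (fun _ => (1 : ℝ)) (X ω) :=
      (measurable_const.indicator hs).comp hX
    have m2 : Measurable fun ω =>
        ((Set.univ.pi fun j => Set.Ico (0 : ℝ) (q.2.2 j))ᶜ).indicator (fun _ => (1 : ℝ)) (X ω) :=
      (measurable_const.indicator hs.compl).comp hX
    exact ((hZ.aestronglyMeasurable.sub (m1.const_mul q.1).aestronglyMeasurable).sub
      (m2.const_mul q.2.1).aestronglyMeasurable).pow 2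
  -- pointwise bound
  have hbnd : ∀ n, ∀ᵐ ω ∂μ, ‖treeLoss (X ω) (Z ω) (u n)‖ ≤ (|Z ω| + C) ^ 2 := by
    intro n
    refine Filter.Eventually.of_forall fun ω => ?_
    have hind : ∀ (s : Set (Fin d → ℝ)),
        s.indicator (fun _ => (1 : ℝ)) (X ω) ∈ Set.Icc (0 : ℝ) 1 := by
      intro s
      by_cases h : X ω ∈ s <;> simp [Set.indicator_apply, h]
    simp only [treeLoss]
    set i1 := (Set.univ.pi fun j => Set.Ico (0 : ℝ) ((u n).2.2 j)).indicator
      (fun _ => (1 : ℝ)) (X ω) with hi1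
    set i2 := ((Set.univ.pi fun j => Set.Ico (0 : ℝ) ((u n).2.2 j))ᶜ).indicator
      (fun _ => (1 : ℝ)) (X ω) with hi2
    have h1 : i1 ∈ Set.Icc (0 : ℝ) 1 := hind _
    have h2 : i2 ∈ Set.Icc (0 : ℝ) 1 := hind _
    have e1 : |(u n).1 * i1| ≤ |(u n).1| := by
      rw [abs_mul]
      calc |(u n).1| * |i1| ≤ |(u n).1| * 1 := by
            gcongr
            rw [abs_le]; exact ⟨le_trans (by norm_num) h1.1, h1.2⟩
        _ = |(u n).1| := mul_one _
    have e2 : |(u n).2.1 * i2| ≤ |(u n).2.1| := by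
      rw [abs_mul]
      calc |(u n).2.1| * |i2| ≤ |(u n).2.1| * 1 := by
            gcongr
            rw [abs_le]; exact ⟨le_trans (by norm_num) h2.1, h2.2⟩
        _ = |(u n).2.1| := mul_one _
    have habs : |Z ω - (u n).1 * i1 - (u n).2.1 * i2| ≤ |Z ω| + C := by
      calc |Z ω - (u n).1 * i1 - (u n).2.1 * i2|
          ≤ |Z ω - (u n).1 * i1| + |(u n).2.1 * i2| := abs_sub _ _
        _ ≤ (|Z ω| + |(u n).1 * i1|) + |(u n).2.1 * i2| := by
            gcongr; exact abs_sub _ _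
        _ ≤ (|Z ω| + |(u n).1|) + |(u n).2.1| :=
            add_le_add (add_le_add le_rfl e1) e2
        _ = |Z ω| + (|(u n).1| + |(u n).2.1|) := by ring
        _ ≤ |Z ω| + C := by gcongr; exact hC n
    calc ‖(Z ω - (u n).1 * i1 - (u n).2.1 * i2) ^ 2‖
        = |Z ω - (u n).1 * i1 - (u n).2.1 * i2| ^ 2 := by
          rw [Real.norm_eq_abs, abs_pow, sq_abs, ← sq_abs]
      _ ≤ (|Z ω| + C) ^ 2 := pow_le_pow_left₀ (abs_nonneg _) habs 2
  -- a.e. pointwise convergence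
  have ha : Filter.Tendsto (fun n => (u n).2.2) atTop (nhds p.2.2) :=
    ((continuous_snd.comp continuous_snd).tendsto p).comp hu
  have hae : ∀ᵐ ω ∂μ, ∀ j, X ω j ≠ p.2.2 j := by
    rw [ae_iff]
    have hvol : (volume : Measure (Fin d → ℝ)) {x | ¬ ∀ j, x j ≠ p.2.2 j} = 0 := by
      have hsub : {x : Fin d → ℝ | ¬ ∀ j, x j ≠ p.2.2 j}
          ⊆ ⋃ j, {x : Fin d → ℝ | x j = p.2.2 j} := by
        intro x hx
        push_neg at hx
        obtain ⟨j, hj⟩ := hx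
        exact Set.mem_iUnion.2 ⟨j, hj⟩
      refine measure_mono_null hsub (measure_iUnion_null fun j => ?_)
      rw [MeasureTheory.volume_pi]
      exact Measure.pi_hyperplane (fun _ : Fin d => (volume : Measure ℝ)) j (p.2.2 j)
    have hmap : Measure.map X μ {x | ¬ ∀ j, x j ≠ p.2.2 j} = 0 := hdens hvol
    have hms : MeasurableSet {x : Fin d → ℝ | ¬ ∀ j, x j ≠ p.2.2 j} := by
      have heq : {x : Fin d → ℝ | ¬ ∀ j, x j ≠ p.2.2 j}
          = ⋃ j, (fun x : Fin d → ℝ => x j) ⁻¹' {p.2.2 j} := by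
        ext x; simp [not_forall]
      rw [heq]
      exact MeasurableSet.iUnion fun j => (measurable_pi_apply j) (measurableSet_singleton _)
    rw [Measure.map_apply hX hms] at hmap
    exact hmap
  have hlim : ∀ᵐ ω ∂μ, Filter.Tendsto (fun n => treeLoss (X ω) (Z ω) (u n)) atTop
      (nhds (treeLoss (X ω) (Z ω) p)) := by
    filter_upwards [hae] with ω hω
    have hα : Filter.Tendsto (fun n => (u n).1) atTop (nhds p.1) :=
      (continuous_fst.tendsto p).comp hu
    have hβ : Filter.Tendsto (fun n => (u n).2.1) atTop (nhds p.2.1) :=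
      ((continuous_fst.comp continuous_snd).tendsto p).comp hu
    set I1 := (Set.univ.pi fun j => Set.Ico (0 : ℝ) (p.2.2 j)).indicator
      (fun _ => (1 : ℝ)) (X ω) with hI1
    set I2 := ((Set.univ.pi fun j => Set.Ico (0 : ℝ) (p.2.2 j))ᶜ).indicator
      (fun _ => (1 : ℝ)) (X ω) with hI2
    have htend : Filter.Tendsto
        (fun n => (Z ω - (u n).1 * I1 - (u n).2.1 * I2) ^ 2) atTop
        (nhds (treeLoss (X ω) (Z ω) p)) := by
      have hrfl : treeLoss (X ω) (Z ω) p = (Z ω - p.1 * I1 - p.2.1 * I2) ^ 2 := rfl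
      rw [hrfl]
      exact ((tendsto_const_nhds.sub (hα.mul tendsto_const_nhds)).sub
        (hβ.mul tendsto_const_nhds)).pow 2
    refine htend.congr' ?_
    filter_upwards [treeLoss_mem_iff hω ha] with n hn
    simp only [treeLoss, hI1, hI2, hn.1, hn.2]
  exact tendsto_integral_of_dominated_convergence _ (fun n => hImeas (u n)) hbound_int hbnd hlim
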